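/- Let w ∈ W_n with canonical decomposition data (l, α_w, β_w, σ_w), where l = ℓ_t(w). Then ℓ_t(w^{−1}) = ℓ_t(w), α_{w^{−1}} = β_w, β_{w^{−1}} = α_w, and σ_{w^{−1}} = a_l (σ_w)^{−1} a_l. -/

import Mathlib

/-!
Common setup: the Weyl group `W n` of type `B_n`, realized as the group of
permutations `w` of `I_n = {±1, …, ±n}` (inside `Equiv.Perm ℤ`, fixing every
integer of absolute value `> n`) such that `w (-i) = - w i` for all `i`.
-/

namespace TypeB

/-- The generator `t = (1, -1)`. -/
def t : Equiv.Perm ℤ := Equiv.swap 1 (-1)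

/-- The generator `s i = (i, i+1)(-i, -(i+1))` (meaningful for `1 ≤ i`). -/
def s (i : ℕ) : Equiv.Perm ℤ :=
  Equiv.swap (i : ℤ) ((i : ℤ) + 1) * Equiv.swap (-(i : ℤ)) (-((i : ℤ) + 1))

/-- The generating set `S_n = {t, s_1, …, s_{n-1}}`. -/
def gens (n : ℕ) : Set (Equiv.Perm ℤ) :=
  {t} ∪ {x | ∃ i : ℕ, 1 ≤ i ∧ i < n ∧ x = s i}

/-- The Weyl group `W_n` of type `B_n`, as a subgroup of `Equiv.Perm ℤ`:
permutations `w` with `w (-i) = - (w i)` for all `i` and fixing all `i` with `|i| > n`. -/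
def W (n : ℕ) : Subgroup (Equiv.Perm ℤ) where
  carrier := {w | (∀ i : ℤ, w (-i) = - w i) ∧ ∀ i : ℤ, (n : ℤ) < |i| → w i = i}
  one_mem' := ⟨fun _ => rfl, fun _ _ => rfl⟩
  mul_mem' := by
    rintro u v ⟨hu1, hu2⟩ ⟨hv1, hv2⟩
    refine ⟨fun i => ?_, fun i hi => ?_⟩
    · simp only [Equiv.Perm.mul_apply, hv1, hu1]
    · simp only [Equiv.Perm.mul_apply, hv2 i hi, hu2 i hi]
  inv_mem' := by
    rintro u ⟨hu1, hu2⟩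
    refine ⟨fun i => ?_, fun i hi => ?_⟩
    · apply u.injective
      rw [(show ∀ x : ℤ, u (u⁻¹ x) = x from fun x => u.apply_symm_apply x), hu1, (show ∀ x : ℤ, u (u⁻¹ x) = x from fun x => u.apply_symm_apply x)]
    · apply u.injective
      rw [(show ∀ x : ℤ, u (u⁻¹ x) = x from fun x => u.apply_symm_apply x), hu2 i hi]

/-- The length of `w` with respect to the generating set `S_n`. -/
noncomputable def len (n : ℕ) (w : Equiv.Perm ℤ) : ℕ :=
  sInf {k | ∃ l : List (Equiv.Perm ℤ), (∀ x ∈ l, x ∈ gens n) ∧ l.prod = w ∧ l.length = k}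

/-- `l` is a reduced expression for `w` with respect to `S_n`. -/
def IsReduced (n : ℕ) (w : Equiv.Perm ℤ) (l : List (Equiv.Perm ℤ)) : Prop :=
  (∀ x ∈ l, x ∈ gens n) ∧ l.prod = w ∧ l.length = len n w

/-- `ℓ_t w`: the number of occurrences of `t` in a reduced expression of `w`
(independent of the chosen reduced expression). -/
noncomputable def lent (n : ℕ) (w : Equiv.Perm ℤ) : ℕ :=
  letI : DecidableEq (Equiv.Perm ℤ) := Classical.decEq _
  sInf {m | ∃ l, IsReduced n w l ∧ l.count t = m}

/-- `r 1 = t` and `r (i+1) = s i * r i`. -/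
def r : ℕ → Equiv.Perm ℤ
  | 0 => 1
  | 1 => t
  | (i + 2) => s (i + 1) * r (i + 1)

/-- `t_1 = t` and `t_{i+1} = s_i * t_i * s_i`. -/
def tperm : ℕ → Equiv.Perm ℤ
  | 0 => 1
  | 1 => t
  | (i + 2) => s (i + 1) * tperm (i + 1) * s (i + 1)

/-- `a l = r 1 * r 2 * ⋯ * r l`, with `a 0 = 1`. -/
def a : ℕ → Equiv.Perm ℤ
  | 0 => 1
  | (l + 1) => a l * r (l + 1)

/-- The symmetric group `𝔖_n`: the subgroup generated by `s_1, …, s_{n-1}`. -/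
def Sym (n : ℕ) : Subgroup (Equiv.Perm ℤ) :=
  Subgroup.closure {x | ∃ i : ℕ, 1 ≤ i ∧ i < n ∧ x = s i}

/-- The parabolic subgroup `𝔖_{l,n-l}`: generated by `{s_1, …, s_{n-1}} \ {s_l}`. -/
def SymP (n l : ℕ) : Subgroup (Equiv.Perm ℤ) :=
  Subgroup.closure {x | ∃ i : ℕ, 1 ≤ i ∧ i < n ∧ i ≠ l ∧ x = s i}

/-- `Y_{l,n-l}`: elements of `𝔖_n` of minimal length in their coset `w 𝔖_{l,n-l}`. -/
def Y (n l : ℕ) : Set (Equiv.Perm ℤ) :=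
  {w | w ∈ Sym n ∧ ∀ u ∈ SymP n l, len n w ≤ len n (w * u)}

/-- The subgroup `𝔖_{[i,j]}` generated by `s_i, …, s_{j-1}`. -/
def SymI (i j : ℕ) : Subgroup (Equiv.Perm ℤ) :=
  Subgroup.closure {x | ∃ k : ℕ, i ≤ k ∧ k < j ∧ x = s k}

/-- The function reversing the interval `[i,j]` (and `[-j,-i]`), for `1 ≤ i`. -/
def revFun (i j : ℤ) : ℤ → ℤ := fun k =>
  if 1 ≤ i ∧ i ≤ k ∧ k ≤ j then i + j - k
  else if 1 ≤ i ∧ -j ≤ k ∧ k ≤ -i then -(i + j) - k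
  else k

lemma revFun_involutive (i j : ℤ) : Function.Involutive (revFun i j) := by
  intro k
  unfold revFun
  split_ifs <;> omega

/-- `σ_{[i,j]}`: the longest element of `𝔖_{[i,j]}`, i.e. the order-reversing
permutation of the interval `[i,j]` (extended to `I_n` by `w(-k) = -w(k)`). -/
def sigmaI (i j : ℕ) : Equiv.Perm ℤ := (revFun_involutive (i : ℤ) (j : ℤ)).toPerm

/-- `σ_{l,n-l}`: the longest element of `𝔖_{l,n-l} = 𝔖_{[1,l]} × 𝔖_{[l+1,n]}`. -/
def sigmaLL (n l : ℕ) : Equiv.Perm ℤ := sigmaI 1 l * sigmaI (l + 1) n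

/-- The function negating all `k` with `|k| ≤ n`. -/
def negnFun (n : ℤ) : ℤ → ℤ := fun k => if -n ≤ k ∧ k ≤ n then -k else k

lemma negnFun_involutive (n : ℤ) : Function.Involutive (negnFun n) := by
  intro k
  unfold negnFun
  split_ifs <;> omega

/-- `w_n`: the longest element of `W_n`; as a permutation, `w_n i = -i` for `|i| ≤ n`. -/
def wlong (n : ℕ) : Equiv.Perm ℤ := (negnFun_involutive (n : ℤ)).toPerm

/-- `c_I = s_{i_1} s_{i_2} ⋯ s_{i_k}` for `I = {i_1 < i_2 < ⋯ < i_k}`. -/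
def cElt (I : Finset ℕ) : Equiv.Perm ℤ := ((I.sort (· ≤ ·)).map s).prod

/-- `d_I = s_{i_k} ⋯ s_{i_2} s_{i_1}` for `I = {i_1 < i_2 < ⋯ < i_k}`. -/
def dElt (I : Finset ℕ) : Equiv.Perm ℤ := (((I.sort (· ≤ ·)).map s).reverse).prod

/-- `X_n^{(m)}`: elements of `W_n` of minimal length in their coset `w W_m`. -/
def X (n m : ℕ) : Set (Equiv.Perm ℤ) :=
  {w | w ∈ W n ∧ ∀ u ∈ W m, len n w ≤ len n (w * u)}

/-- Bruhat order: `x ≤ y` iff some reduced expression of `y` contains a subword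
which is a reduced expression of `x`. -/
def BruhatLE (n : ℕ) (x y : Equiv.Perm ℤ) : Prop :=
  ∃ ly, IsReduced n y ly ∧ ∃ lx, lx.Sublist ly ∧ IsReduced n x lx

/-- Strict Bruhat order. -/
def BruhatLT (n : ℕ) (x y : Equiv.Perm ℤ) : Prop := BruhatLE n x y ∧ x ≠ y

/-- `D_i(W_n)`: the set of `x` such that exactly one of `s_i, s_{i+1}` is a
(right) descent of `x`. -/
def Dset (n i : ℕ) : Set (Equiv.Perm ℤ) :=
  {x | Xor' (len n (x * s i) < len n x) (len n (x * s (i + 1)) < len n x)}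

open Classical in
/-- `γ_i x`: the unique element of `{x s_i, x s_{i+1}} ∩ D_i(W_n)` (for `x ∈ D_i(W_n)`). -/
noncomputable def gamma (n i : ℕ) (x : Equiv.Perm ℤ) : Equiv.Perm ℤ :=
  if x * s i ∈ Dset n i then x * s i else x * s (i + 1)

/-- `E_m^{(r)}`: the set of `w ∈ W_m` such that `|w 1| > |w i|` for `2 ≤ i ≤ r+2`
and `(w 2, …, w (r+2))` is a shuffle of a positive decreasing sequence and a
negative increasing sequence. -/
def E (m ρ : ℕ) : Set (Equiv.Perm ℤ) :=
  {w | w ∈ W m ∧ (∀ i : ℕ, 2 ≤ i → i ≤ ρ + 2 → |w (i : ℤ)| < |w (1 : ℤ)|) ∧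
    ∀ i j : ℕ, 2 ≤ i → i < j → j ≤ ρ + 2 →
      (0 < w (i : ℤ) → 0 < w (j : ℤ) → w (j : ℤ) < w (i : ℤ)) ∧
      (w (i : ℤ) < 0 → w (j : ℤ) < 0 → w (i : ℤ) < w (j : ℤ))}

/-- The product `r_{i_1} ⋯ r_{i_l}` for a sequence `i : Fin l → ℕ`. -/
def prodR {l : ℕ} (i : Fin l → ℕ) : Equiv.Perm ℤ := (List.ofFn fun k => r (i k)).prod

/-- `(l, α, β, σ)` is a decomposition of `w` as in the decomposition lemma:
`l ≤ n`, `α, β ∈ Y_{l,n-l}`, `σ ∈ 𝔖_{l,n-l}` and `w = α a_l σ β⁻¹`. -/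
def IsDecomp (n : ℕ) (w : Equiv.Perm ℤ) (l : ℕ) (α β σ : Equiv.Perm ℤ) : Prop :=
  l ≤ n ∧ α ∈ Y n l ∧ β ∈ Y n l ∧ σ ∈ SymP n l ∧ w = α * a l * σ * β⁻¹

/-! Auxiliary lemmas for stmt4 -/

lemma s_apply {i : ℕ} (hi : 1 ≤ i) (k : ℤ) :
    s i k = if k = (i : ℤ) then (i : ℤ) + 1 else if k = (i : ℤ) + 1 then (i : ℤ)
      else if k = -(i : ℤ) then -((i : ℤ) + 1) else if k = -((i : ℤ) + 1) then -(i : ℤ) else k := by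
  simp only [s, Equiv.Perm.mul_apply, Equiv.swap_apply_def]
  split_ifs <;> omega

lemma s_mul_s {i : ℕ} (hi : 1 ≤ i) : s i * s i = 1 := by
  ext k
  simp only [Equiv.Perm.mul_apply, s_apply hi, Equiv.Perm.one_apply]
  split_ifs <;> omega

lemma gens_inv {n : ℕ} {x : Equiv.Perm ℤ} (hx : x ∈ gens n) : x⁻¹ = x := by
  rcases hx with hx | ⟨i, hi1, _, rfl⟩
  · rw [Set.mem_singleton_iff.mp hx, t, Equiv.swap_inv]
  · exact inv_eq_of_mul_eq_one_right (s_mul_s hi1)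

lemma reverse_prod {l : List (Equiv.Perm ℤ)} (h : ∀ x ∈ l, x⁻¹ = x) :
    l.reverse.prod = l.prod⁻¹ := by
  induction l with
  | nil => simp
  | cons a l ih =>
    rw [List.reverse_cons, List.prod_append, List.prod_singleton, List.prod_cons, mul_inv_rev,
      ih (fun x hx => h x (List.mem_cons_of_mem a hx)), h a List.mem_cons_self]

lemma len_inv (n : ℕ) (w : Equiv.Perm ℤ) : len n w⁻¹ = len n w := by
  unfold len
  congr 1
  ext k
  simp only [Set.mem_setOf_eq]
  constructor
  · rintro ⟨l, hg, hp, hlen⟩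
    exact ⟨l.reverse, fun x hx => hg x (List.mem_reverse.mp hx),
      by rw [reverse_prod (fun x hx => gens_inv (hg x hx)), hp, inv_inv],
      by rw [List.length_reverse, hlen]⟩
  · rintro ⟨l, hg, hp, hlen⟩
    exact ⟨l.reverse, fun x hx => hg x (List.mem_reverse.mp hx),
      by rw [reverse_prod (fun x hx => gens_inv (hg x hx)), hp],
      by rw [List.length_reverse, hlen]⟩

lemma isReduced_reverse {n : ℕ} {w : Equiv.Perm ℤ} {l : List (Equiv.Perm ℤ)}
    (h : IsReduced n w l) : IsReduced n w⁻¹ l.reverse := by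
  obtain ⟨hg, hp, hlen⟩ := h
  exact ⟨fun x hx => hg x (List.mem_reverse.mp hx),
    by rw [reverse_prod (fun x hx => gens_inv (hg x hx)), hp],
    by rw [List.length_reverse, hlen, len_inv]⟩

lemma lent_inv (n : ℕ) (w : Equiv.Perm ℤ) : lent n w⁻¹ = lent n w := by
  classical
  unfold lent
  congr 1
  ext m
  simp only [Set.mem_setOf_eq]
  constructor
  · rintro ⟨l, hred, hc⟩
    refine ⟨l.reverse, by simpa using isReduced_reverse hred, ?_⟩
    rw [List.count_reverse, hc]
  · rintro ⟨l, hred, hc⟩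
    refine ⟨l.reverse, isReduced_reverse hred, ?_⟩
    rw [List.count_reverse, hc]
def rFun' (m k : ℤ) : ℤ :=
  if 1 ≤ m ∧ k = 1 then -m else if 2 ≤ k ∧ k ≤ m then k - 1
  else if 1 ≤ m ∧ k = -1 then m else if -m ≤ k ∧ k ≤ -2 then k + 1 else k

def aFun' (l k : ℤ) : ℤ :=
  if 1 ≤ k ∧ k ≤ l then k - l - 1 else if -l ≤ k ∧ k ≤ -1 then k + l + 1 else k

def sFun (i k : ℤ) : ℤ :=
  if k = i then i + 1 else if k = i + 1 then i
  else if k = -i then -(i + 1) else if k = -(i + 1) then -i else k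

lemma aFun'_spec (l k : ℤ) :
    (1 ≤ k ∧ k ≤ l → aFun' l k = k - l - 1) ∧
    (-l ≤ k ∧ k ≤ -1 → aFun' l k = k + l + 1) ∧
    (¬(1 ≤ k ∧ k ≤ l) ∧ ¬(-l ≤ k ∧ k ≤ -1) → aFun' l k = k) := by
  unfold aFun'; split_ifs <;> refine ⟨fun h => ?_, fun h => ?_, fun h => ?_⟩ <;> omega

lemma sFun_spec (i k : ℤ) (hi : 1 ≤ i) :
    (k = i → sFun i k = i + 1) ∧ (k = i + 1 → sFun i k = i) ∧
    (k = -i → sFun i k = -(i + 1)) ∧ (k = -(i + 1) → sFun i k = -i) ∧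
    (k ≠ i ∧ k ≠ i + 1 ∧ k ≠ -i ∧ k ≠ -(i + 1) → sFun i k = k) := by
  unfold sFun; split_ifs <;>
    refine ⟨fun h => ?_, fun h => ?_, fun h => ?_, fun h => ?_, fun h => ?_⟩ <;> omega

lemma rFun'_spec (m k : ℤ) :
    (1 ≤ m ∧ k = 1 → rFun' m k = -m) ∧ (2 ≤ k ∧ k ≤ m → rFun' m k = k - 1) ∧
    (1 ≤ m ∧ k = -1 → rFun' m k = m) ∧ (-m ≤ k ∧ k ≤ -2 → rFun' m k = k + 1) ∧
    (¬(1 ≤ m ∧ k = 1) ∧ ¬(2 ≤ k ∧ k ≤ m) ∧ ¬(1 ≤ m ∧ k = -1) ∧ ¬(-m ≤ k ∧ k ≤ -2) →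
      rFun' m k = k) := by
  unfold rFun'; split_ifs <;>
    refine ⟨fun h => ?_, fun h => ?_, fun h => ?_, fun h => ?_, fun h => ?_⟩ <;> omega

lemma aFun'_invol (l k : ℤ) : aFun' l (aFun' l k) = k := by
  have h1 := aFun'_spec l k
  have h2 := aFun'_spec l (aFun' l k)
  omega

lemma s_apply' {i : ℕ} (hi : 1 ≤ i) (k : ℤ) : s i k = sFun i k := by
  simp only [s, sFun, Equiv.Perm.mul_apply, Equiv.swap_apply_def]
  split_ifs <;> omega

lemma r_apply (m : ℕ) : ∀ k : ℤ, r m k = rFun' m k := by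
  induction m with
  | zero =>
    intro k
    simp only [r, Equiv.Perm.one_apply, rFun', Nat.cast_zero]
    split_ifs <;> omega
  | succ m ih =>
    cases m with
    | zero =>
      intro k
      simp only [r, t, Equiv.swap_apply_def, rFun', Nat.cast_one]
      split_ifs <;> omega
    | succ m' =>
      intro k
      have hr : r (m' + 1 + 1) = s (m' + 1) * r (m' + 1) := rfl
      rw [hr, Equiv.Perm.mul_apply, ih k, s_apply' (by omega)]
      have hm : ((m' + 1 + 1 : ℕ) : ℤ) = ((m' + 1 : ℕ) : ℤ) + 1 := by push_cast; ring
      rw [hm]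
      have h1 := rFun'_spec ((m' + 1 : ℕ) : ℤ) k
      have h2 := sFun_spec ((m' + 1 : ℕ) : ℤ) (rFun' ((m' + 1 : ℕ) : ℤ) k) (by push_cast; omega)
      have h3 := rFun'_spec (((m' + 1 : ℕ) : ℤ) + 1) k
      omega

lemma a_apply (l : ℕ) : ∀ k : ℤ, a l k = aFun' l k := by
  induction l with
  | zero =>
    intro k
    simp only [a, Equiv.Perm.one_apply, aFun', Nat.cast_zero]
    split_ifs <;> omega
  | succ l ih =>
    intro k
    have ha : a (l + 1) = a l * r (l + 1) := rfl
    rw [ha, Equiv.Perm.mul_apply, r_apply, ih]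
    have hl : ((l + 1 : ℕ) : ℤ) = (l : ℤ) + 1 := by push_cast; ring
    rw [hl]
    have h1 := rFun'_spec ((l : ℤ) + 1) k
    have h2 := aFun'_spec (l : ℤ) (rFun' ((l : ℤ) + 1) k)
    have h3 := aFun'_spec ((l : ℤ) + 1) k
    omega

lemma a_mul_a (l : ℕ) : a l * a l = 1 := by
  ext k
  simp only [Equiv.Perm.mul_apply, a_apply, Equiv.Perm.one_apply]
  exact aFun'_invol l k

lemma a_inv (l : ℕ) : (a l)⁻¹ = a l := inv_eq_of_mul_eq_one_right (a_mul_a l)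

lemma a_conj_lt {l i : ℕ} (hi : 1 ≤ i) (hil : i < l) : a l * s i * a l = s (l - i) := by
  ext k
  have hcast : ((l - i : ℕ) : ℤ) = (l : ℤ) - (i : ℤ) := by
    have : i ≤ l := le_of_lt hil
    push_cast [this]; ring
  rw [Equiv.Perm.mul_apply, Equiv.Perm.mul_apply, a_apply, s_apply' hi, a_apply,
    s_apply' (show 1 ≤ l - i by omega), hcast]
  have h1 := aFun'_spec (l : ℤ) k
  have h2 := sFun_spec (i : ℤ) (aFun' (l : ℤ) k) (by omega)
  have h3 := aFun'_spec (l : ℤ) (sFun (i : ℤ) (aFun' (l : ℤ) k))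
  have h4 := sFun_spec ((l : ℤ) - (i : ℤ)) k (by omega)
  omega

lemma a_conj_gt {l i : ℕ} (hil : l < i) : a l * s i * a l = s i := by
  ext k
  simp only [Equiv.Perm.mul_apply, a_apply, s_apply' (show 1 ≤ i by omega)]
  have h1 := aFun'_spec (l : ℤ) k
  have h2 := sFun_spec (i : ℤ) (aFun' (l : ℤ) k) (by omega)
  have h3 := aFun'_spec (l : ℤ) (sFun (i : ℤ) (aFun' (l : ℤ) k))
  have h4 := sFun_spec (i : ℤ) k (by omega)
  omega
lemma conj_mem (n l : ℕ) (hln : l ≤ n) {σ : Equiv.Perm ℤ} (hσ : σ ∈ SymP n l) :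
    a l * σ * a l ∈ SymP n l := by
  induction hσ using Subgroup.closure_induction with
  | mem x hx =>
    obtain ⟨i, hi1, hin, hil, rfl⟩ := hx
    rcases lt_or_gt_of_ne hil with h | h
    · rw [a_conj_lt hi1 h]
      exact Subgroup.subset_closure ⟨l - i, by omega, by omega, by omega, rfl⟩
    · rw [a_conj_gt h]
      exact Subgroup.subset_closure ⟨i, hi1, hin, hil, rfl⟩
  | one => rw [mul_one, a_mul_a]; exact one_mem _
  | mul x y hx hy px py =>
    have hxy : a l * (x * y) * a l = (a l * x * a l) * (a l * y * a l) := by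
      have h1 : (a l * x * a l) * (a l * y * a l) = a l * x * (a l * a l) * y * a l := by
        group
      rw [h1, a_mul_a, mul_one]
      group
    rw [hxy]
    exact mul_mem px py
  | inv x hx px =>
    have hxi : a l * x⁻¹ * a l = (a l * x * a l)⁻¹ := by
      rw [mul_inv_rev, mul_inv_rev, a_inv, ← mul_assoc]
    rw [hxi]
    exact inv_mem px
/-- if `w = α a_l σ β⁻¹` is the canonical decomposition of `w`
(`l = ℓ_t(w)`), then `ℓ_t(w⁻¹) = ℓ_t(w)` and the canonical decomposition of
`w⁻¹` is `w⁻¹ = β a_l (a_l σ⁻¹ a_l) α⁻¹`, i.e. `α_{w⁻¹} = β_w`, `β_{w⁻¹} = α_w`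
and `σ_{w⁻¹} = a_l σ_w⁻¹ a_l`. -/
theorem stmt4 (n : ℕ) (w : Equiv.Perm ℤ) (hw : w ∈ W n)
    (l : ℕ) (α β σ : Equiv.Perm ℤ) (hdec : IsDecomp n w l α β σ) (hl : l = lent n w) :
    lent n w⁻¹ = lent n w ∧ IsDecomp n w⁻¹ l β α (a l * σ⁻¹ * a l) := by
  obtain ⟨hln, hα, hβ, hσ, hprod⟩ := hdec
  refine ⟨lent_inv n w, hln, hβ, hα, conj_mem n l hln (inv_mem hσ), ?_⟩
  rw [hprod]
  calc (α * a l * σ * β⁻¹)⁻¹ = β * σ⁻¹ * (a l)⁻¹ * α⁻¹ := by group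
    _ = β * σ⁻¹ * a l * α⁻¹ := by rw [a_inv]
    _ = β * (a l * a l) * σ⁻¹ * a l * α⁻¹ := by rw [a_mul_a, mul_one]
    _ = β * a l * (a l * σ⁻¹ * a l) * α⁻¹ := by group

end TypeB
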